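/- Fix ρ₊, n₊, u₊, μ, A₁, A₂ > 0 and γ, α ≥ 1. There exist constants δ₀ > 0 and C > 0 (depending only on these parameters) such that: if 0 < δ = |u₊ − u₋| ≤ δ₀ with u₋ > 0, and ũ, ṽ : [0,∞) → ℝ are twice continuously differentiable, positive, bounded above and below by positive constants, with ũ(0) = ṽ(0) = u₋, ũ → u₊, ṽ → u₊, ũ_x → 0, ṽ_x → 0 at infinity, |ũ(x) − u₊| ≤ δ₀ and |ṽ(x) − u₊| ≤ δ₀ for all x, satisfying on (0,∞) the reduced stationary system (ρ₊u₊ũ + A₁ρ₊^γu₊^γ ũ^{−γ})_x = (μ ũ_x)_x + (n₊u₊/ṽ)(ṽ − ũ) and (n₊u₊ṽ + A₂n₊^αu₊^α ṽ^{−α})_x = (n₊u₊ ṽ_x/ṽ)_x − (n₊u₊/ṽ)(ṽ − ũ), then ∫₀^∞ ( μ ũ_x² + n₊u₊ ṽ_x²/ṽ + (n₊u₊/ṽ)(ṽ − ũ)² ) dx ≤ C δ². -/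

import Mathlib

open Filter Topology MeasureTheory Set

noncomputable def Faux (a c e : ℝ) (w : ℝ) : ℝ := a * w + c * w ^ e
noncomputable def Fdaux (a c e : ℝ) (w : ℝ) : ℝ := a + c * (e * w ^ (e - 1))
noncomputable def fq (a c e uq : ℝ) (w : ℝ) : ℝ := Fdaux a c e w * (w - uq)
noncomputable def Phi (a c e uq : ℝ) (u : ℝ) : ℝ := ∫ t in uq..u, fq a c e uq t
noncomputable def Mb (a c e uq : ℝ) : ℝ := |a| + |c| * (|e| * (uq / 2) ^ (e - 1))

lemma Faux_hasDerivAt (a c e : ℝ) {w : ℝ} (hw : w ≠ 0) :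
    HasDerivAt (Faux a c e) (Fdaux a c e w) w := by
  have h1 : HasDerivAt (fun x : ℝ => x ^ e) (e * w ^ (e - 1)) w :=
    Real.hasDerivAt_rpow_const (Or.inl hw)
  have h2 := ((hasDerivAt_id w).const_mul a).add (h1.const_mul c)
  have h3 : Faux a c e = (fun y => a * id y) + fun y => c * y ^ e := by
    funext y; simp [Faux]
  rw [h3, show Fdaux a c e w = a * 1 + c * (e * w ^ (e - 1)) by simp [Fdaux]]
  exact h2

lemma Fdaux_contAt (a c e : ℝ) {w : ℝ} (hw : w ≠ 0) :
    ContinuousAt (Fdaux a c e) w := by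
  have h1 : ContinuousAt (fun x : ℝ => x ^ (e - 1)) w :=
    Real.continuousAt_rpow_const _ _ (Or.inl hw)
  exact continuousAt_const.add (continuousAt_const.mul (continuousAt_const.mul h1))

lemma fq_contOn (a c e uq : ℝ) : ContinuousOn (fq a c e uq) (Ioi 0) := by
  intro w hw
  exact ((Fdaux_contAt a c e (ne_of_gt hw)).mul
    (continuousAt_id.sub continuousAt_const)).continuousWithinAt

lemma fq_intervalIntegrable (a c e : ℝ) {uq u : ℝ} (huq : 0 < uq) (hu : 0 < u) :
    IntervalIntegrable (fq a c e uq) MeasureTheory.volume uq u := by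
  apply ContinuousOn.intervalIntegrable
  apply (fq_contOn a c e uq).mono
  intro t ht
  exact lt_of_lt_of_le (lt_min huq hu) ht.1

lemma Phi_hasDerivAt (a c e : ℝ) {uq u : ℝ} (huq : 0 < uq) (hu : 0 < u) :
    HasDerivAt (Phi a c e uq) (fq a c e uq u) u := by
  refine intervalIntegral.integral_hasDerivAt_right (fq_intervalIntegrable a c e huq hu)
    ?_ (((fq_contOn a c e uq) u hu).continuousAt (Ioi_mem_nhds hu))
  exact (ContinuousOn.stronglyMeasurableAtFilter isOpen_Ioi (fq_contOn a c e uq)) u hu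

lemma Phi_self (a c e uq : ℝ) : Phi a c e uq uq = 0 := by
  simp [Phi]

lemma Fdaux_bound (a c e : ℝ) {uq w : ℝ} (huq : 0 < uq) (he : e ≤ 1) (hw : uq / 2 ≤ w) :
    |Fdaux a c e w| ≤ Mb a c e uq := by
  have h2 : (0:ℝ) < uq / 2 := by linarith
  have hrle : w ^ (e - 1) ≤ (uq / 2) ^ (e - 1) :=
    Real.rpow_le_rpow_of_nonpos h2 hw (by linarith)
  have hrnn : (0:ℝ) ≤ w ^ (e - 1) := Real.rpow_nonneg (by linarith) _
  have : |Fdaux a c e w| ≤ |a| + |c| * (|e| * w ^ (e - 1)) := by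
    refine (abs_add_le _ _).trans ?_
    gcongr
    rw [abs_mul, abs_mul]
    gcongr
    rw [abs_of_nonneg hrnn]
  refine this.trans ?_
  unfold Mb
  gcongr

lemma Faux_lip (a c e : ℝ) {uq u : ℝ} (huq : 0 < uq) (he : e ≤ 1)
    (hu : uq / 2 ≤ u) :
    |Faux a c e u - Faux a c e uq| ≤ Mb a c e uq * |u - uq| := by
  have hf : ∀ w ∈ Ici (uq / 2), HasDerivWithinAt (Faux a c e) (Fdaux a c e w) (Ici (uq/2)) w := by
    intro w hw
    simp only [mem_Ici] at hw
    have hw0 : (0:ℝ) < w := lt_of_lt_of_le (by linarith) hw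
    exact (Faux_hasDerivAt a c e hw0.ne').hasDerivWithinAt
  have hb : ∀ w ∈ Ici (uq / 2), ‖Fdaux a c e w‖ ≤ Mb a c e uq := fun w hw =>
    Fdaux_bound a c e huq he hw
  have := Convex.norm_image_sub_le_of_norm_hasDerivWithin_le hf hb (convex_Ici _)
    (show uq ∈ Ici (uq/2) from mem_Ici.mpr (by linarith)) (show u ∈ Ici (uq/2) from mem_Ici.mpr hu)
  simpa [Real.norm_eq_abs] using this

lemma Mb_pos (a c e : ℝ) {uq : ℝ} (ha : a ≠ 0) (huq : 0 < uq) : 0 < Mb a c e uq := by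
  unfold Mb
  have h1 : 0 < |a| := abs_pos.mpr ha
  have h2 : 0 ≤ |c| * (|e| * (uq / 2) ^ (e - 1)) := by positivity
  linarith

lemma Phi_bound (a c e : ℝ) {uq u δ : ℝ} (huq : 0 < uq) (he : e ≤ 1)
    (hδ : |uq - u| ≤ δ) (hδ0 : δ ≤ uq / 2) :
    |Phi a c e uq u| ≤ Mb a c e uq * δ * δ := by
  have hb : ∀ t ∈ Set.uIoc uq u, ‖fq a c e uq t‖ ≤ Mb a c e uq * δ := by
    intro t ht
    have h1 : min uq u < t := ht.1
    have h2 : t ≤ max uq u := ht.2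
    have hge : uq - δ ≤ min uq u := by
      apply le_min (by linarith [abs_nonneg (uq - u)])
      have := (abs_le.mp hδ).2
      linarith
    have hle : max uq u ≤ uq + δ := by
      apply max_le (by linarith [abs_nonneg (uq - u)])
      have := (abs_le.mp hδ).1
      linarith
    have ht2 : uq / 2 ≤ t := by linarith
    have htu : |t - uq| ≤ δ := abs_le.mpr ⟨by linarith, by linarith⟩
    have := Fdaux_bound a c e huq he ht2
    calc ‖fq a c e uq t‖ = |Fdaux a c e t| * |t - uq| := by
          rw [Real.norm_eq_abs, fq, abs_mul]
      _ ≤ Mb a c e uq * δ := by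
          apply mul_le_mul this htu (abs_nonneg _) ((abs_nonneg _).trans this)
  have h := intervalIntegral.norm_integral_le_of_norm_le_const hb
  rw [Phi]
  refine (h.trans ?_)
  have hδnn : 0 ≤ δ := le_trans (abs_nonneg _) hδ
  have hM : 0 ≤ Mb a c e uq := (abs_nonneg _).trans (Fdaux_bound a c e huq he le_rfl)
  have hub : |u - uq| ≤ δ := by rw [abs_sub_comm]; exact hδ
  exact mul_le_mul_of_nonneg_left hub (mul_nonneg hM hδnn)

set_option maxHeartbeats 2000000 in
/-- uniform energy estimate ∫ (μ ũ_x² + n₊u₊ ṽ_x²/ṽ + (n₊u₊/ṽ)(ṽ−ũ)²) ≤ Cδ²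
for solutions of the reduced stationary system with small boundary strength δ. -/
theorem stmt2 (ρp np up μ A1 A2 γ α : ℝ)
    (hρp : 0 < ρp) (hnp : 0 < np) (hup : 0 < up)
    (hμ : 0 < μ) (hA1 : 0 < A1) (hA2 : 0 < A2) (hγ : 1 ≤ γ) (hα : 1 ≤ α) :
    ∃ δ₀ C : ℝ, 0 < δ₀ ∧ 0 < C ∧
      ∀ (um : ℝ) (ut vt : ℝ → ℝ),
        0 < um → 0 < |up - um| → |up - um| ≤ δ₀ →
        ContDiff ℝ 2 ut → ContDiff ℝ 2 vt →
        (∀ x ≥ (0:ℝ), 0 < ut x ∧ 0 < vt x) →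
        (∃ c1 c2 : ℝ, 0 < c1 ∧ ∀ x ≥ (0:ℝ), c1 ≤ ut x ∧ ut x ≤ c2 ∧ c1 ≤ vt x ∧ vt x ≤ c2) →
        ut 0 = um → vt 0 = um →
        Tendsto ut atTop (nhds up) → Tendsto vt atTop (nhds up) →
        Tendsto (deriv ut) atTop (nhds 0) → Tendsto (deriv vt) atTop (nhds 0) →
        (∀ x ≥ (0:ℝ), |ut x - up| ≤ δ₀ ∧ |vt x - up| ≤ δ₀) →
        (∀ x > (0:ℝ),
          deriv (fun y => ρp * up * ut y + A1 * ρp ^ γ * up ^ γ * (ut y) ^ (-γ)) x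
            = deriv (fun y => μ * deriv ut y) x + (np * up / vt x) * (vt x - ut x)) →
        (∀ x > (0:ℝ),
          deriv (fun y => np * up * vt y + A2 * np ^ α * up ^ α * (vt y) ^ (-α)) x
            = deriv (fun y => np * up * deriv vt y / vt y) x - (np * up / vt x) * (vt x - ut x)) →
        (∫ x in Set.Ioi (0:ℝ),
            (μ * (deriv ut x) ^ 2 + np * up * (deriv vt x) ^ 2 / vt x
              + (np * up / vt x) * (vt x - ut x) ^ 2))
          ≤ C * |up - um| ^ 2 := by
  refine ⟨up / 2,
    2 * (Mb (ρp * up) (A1 * ρp ^ γ * up ^ γ) (-γ) up + Mb (np * up) (A2 * np ^ α * up ^ α) (-α) up),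
    by linarith, ?_, ?_⟩
  · have m1 := Mb_pos (ρp * up) (A1 * ρp ^ γ * up ^ γ) (-γ) (mul_pos hρp hup).ne' hup
    have m2 := Mb_pos (np * up) (A2 * np ^ α * up ^ α) (-α) (mul_pos hnp hup).ne' hup
    linarith
  intro um ut vt hum hDpos hDle hut2 hvt2 hpos hbd hut0 hvt0 hutT hvtT hdutT hdvtT hnear heq1 heq2
  clear hbd hnear
  set aa1 := ρp * up with haa1
  set cc1 := A1 * ρp ^ γ * up ^ γ with hcc1
  set aa2 := np * up with haa2
  set cc2 := A2 * np ^ α * up ^ α with hcc2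
  set ee1 := -γ with hee1
  set ee2 := -α with hee2
  set D := |up - um| with hD
  have he1 : ee1 ≤ 1 := by rw [hee1]; linarith
  have he2 : ee2 ≤ 1 := by rw [hee2]; linarith
  have haa2pos : 0 < aa2 := mul_pos hnp hup
  have hutd : Differentiable ℝ ut := hut2.differentiable (by norm_num)
  have hvtd : Differentiable ℝ vt := hvt2.differentiable (by norm_num)
  have hdut_cd : ContDiff ℝ 1 (deriv ut) := by
    have h := (contDiff_succ_iff_deriv (n := 1)).mp (by exact_mod_cast hut2)
    exact h.2.2
  have hdvt_cd : ContDiff ℝ 1 (deriv vt) := by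
    have h := (contDiff_succ_iff_deriv (n := 1)).mp (by exact_mod_cast hvt2)
    exact h.2.2
  have hdutd : Differentiable ℝ (deriv ut) := hdut_cd.differentiable one_ne_zero
  have hdvtd : Differentiable ℝ (deriv vt) := hdvt_cd.differentiable one_ne_zero
  have hdutc : Continuous (deriv ut) := hdut_cd.continuous
  have hdvtc : Continuous (deriv vt) := hdvt_cd.continuous
  have hutpos : ∀ x : ℝ, 0 ≤ x → 0 < ut x := fun x hx => (hpos x hx).1
  have hvtpos : ∀ x : ℝ, 0 ≤ x → 0 < vt x := fun x hx => (hpos x hx).2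
  have hP : ∀ x : ℝ, 0 < x → HasDerivAt (fun y => aa1 * ut y + cc1 * ut y ^ ee1)
      (Fdaux aa1 cc1 ee1 (ut x) * deriv ut x) x := fun x hx =>
    (Faux_hasDerivAt aa1 cc1 ee1 (hutpos x hx.le).ne').comp x (hutd x).hasDerivAt
  have hQ : ∀ x : ℝ, 0 < x → HasDerivAt (fun y => aa2 * vt y + cc2 * vt y ^ ee2)
      (Fdaux aa2 cc2 ee2 (vt x) * deriv vt x) x := fun x hx =>
    (Faux_hasDerivAt aa2 cc2 ee2 (hvtpos x hx.le).ne').comp x (hvtd x).hasDerivAt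
  have hS : ∀ x : ℝ, HasDerivAt (fun y => μ * deriv ut y) (μ * deriv (deriv ut) x) x :=
    fun x => ((hdutd x).hasDerivAt).const_mul μ
  have hTd : ∀ x : ℝ, 0 < x → DifferentiableAt ℝ (fun y => aa2 * deriv vt y / vt y) x :=
    fun x hx => (((hdvtd x).hasDerivAt.const_mul aa2).div (hvtd x).hasDerivAt
      (hvtpos x hx.le).ne').differentiableAt
  have e1x : ∀ x : ℝ, 0 < x → Fdaux aa1 cc1 ee1 (ut x) * deriv ut x
      = μ * deriv (deriv ut) x + aa2 / vt x * (vt x - ut x) := by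
    intro x hx
    rw [← (hP x hx).deriv, ← (hS x).deriv]
    exact heq1 x hx
  have e2x : ∀ x : ℝ, 0 < x → Fdaux aa2 cc2 ee2 (vt x) * deriv vt x
      = deriv (fun y => aa2 * deriv vt y / vt y) x - aa2 / vt x * (vt x - ut x) := by
    intro x hx
    rw [← (hQ x hx).deriv]
    exact heq2 x hx
  set hfun : ℝ → ℝ := fun x => Faux aa1 cc1 ee1 (ut x) + Faux aa2 cc2 ee2 (vt x)
    - (μ * deriv ut x + aa2 * deriv vt x / vt x) with hhfun
  set c0 : ℝ := Faux aa1 cc1 ee1 up + Faux aa2 cc2 ee2 up with hc0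
  have hderivh : ∀ x : ℝ, 0 < x → HasDerivAt hfun 0 x := by
    intro x hx
    have h2 : HasDerivAt hfun
        ((Fdaux aa1 cc1 ee1 (ut x) * deriv ut x + Fdaux aa2 cc2 ee2 (vt x) * deriv vt x)
          - (μ * deriv (deriv ut) x + deriv (fun y => aa2 * deriv vt y / vt y) x)) x :=
      ((hP x hx).add (hQ x hx)).sub ((hS x).add (hTd x hx).hasDerivAt)
    have h0 : (Fdaux aa1 cc1 ee1 (ut x) * deriv ut x + Fdaux aa2 cc2 ee2 (vt x) * deriv vt x)
          - (μ * deriv (deriv ut) x + deriv (fun y => aa2 * deriv vt y / vt y) x) = 0 := by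
      rw [e1x x hx, e2x x hx]; ring
    exact h0 ▸ h2
  have hconth : ∀ x : ℝ, 0 ≤ x → ContinuousAt hfun x := by
    intro x hx
    have k1 : ContinuousAt (fun y => Faux aa1 cc1 ee1 (ut y)) x :=
      ((Faux_hasDerivAt aa1 cc1 ee1 (hutpos x hx).ne').continuousAt).comp
        (hutd.continuous.continuousAt)
    have k2 : ContinuousAt (fun y => Faux aa2 cc2 ee2 (vt y)) x :=
      ((Faux_hasDerivAt aa2 cc2 ee2 (hvtpos x hx).ne').continuousAt).comp
        (hvtd.continuous.continuousAt)
    have k3 : ContinuousAt (fun y => μ * deriv ut y) x :=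
      (continuous_const.mul hdutc).continuousAt
    have k4 : ContinuousAt (fun y => aa2 * deriv vt y / vt y) x :=
      ((continuous_const.mul hdvtc).continuousAt).div
        (hvtd.continuous.continuousAt) (hvtpos x hx).ne'
    exact (k1.add k2).sub (k3.add k4)
  have htoph : Tendsto hfun atTop (𝓝 c0) := by
    have t1 : Tendsto (fun x => Faux aa1 cc1 ee1 (ut x)) atTop (𝓝 (Faux aa1 cc1 ee1 up)) :=
      ((Faux_hasDerivAt aa1 cc1 ee1 hup.ne').continuousAt.tendsto).comp hutT
    have t2 : Tendsto (fun x => Faux aa2 cc2 ee2 (vt x)) atTop (𝓝 (Faux aa2 cc2 ee2 up)) :=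
      ((Faux_hasDerivAt aa2 cc2 ee2 hup.ne').continuousAt.tendsto).comp hvtT
    have t3 : Tendsto (fun x => μ * deriv ut x) atTop (𝓝 (μ * 0)) := hdutT.const_mul μ
    have t4 : Tendsto (fun x => aa2 * deriv vt x / vt x) atTop (𝓝 (aa2 * 0 / up)) :=
      (hdvtT.const_mul aa2).div hvtT hup.ne'
    have := (t1.add t2).sub (t3.add t4)
    simpa using this
  have hconsth : ∀ x : ℝ, 0 < x → hfun x = c0 := by
    intro x hx
    have hle : ∀ R, x ≤ R → hfun R = hfun x := by
      intro R hR
      have hco : ContinuousOn hfun (Icc x R) := fun y hy =>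
        (hconth y (le_trans hx.le hy.1)).continuousWithinAt
      have hdv : ∀ y ∈ Ico x R, HasDerivWithinAt hfun 0 (Ici y) y := fun y hy =>
        (hderivh y (lt_of_lt_of_le hx hy.1)).hasDerivWithinAt
      exact constant_of_has_deriv_right_zero hco hdv R (right_mem_Icc.mpr hR)
    have h5 : Tendsto hfun atTop (𝓝 (hfun x)) :=
      Tendsto.congr' (by filter_upwards [eventually_ge_atTop x] with R hR using (hle R hR).symm)
        tendsto_const_nhds
    exact tendsto_nhds_unique h5 htoph
  have h0val : hfun 0 = c0 := by
    have l1 : Tendsto hfun (𝓝[>] (0:ℝ)) (𝓝 (hfun 0)) :=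
      (hconth 0 le_rfl).tendsto.mono_left nhdsWithin_le_nhds
    have l2 : Tendsto hfun (𝓝[>] (0:ℝ)) (𝓝 c0) :=
      Tendsto.congr' (by filter_upwards [self_mem_nhdsWithin] with y hy using (hconsth y hy).symm)
        tendsto_const_nhds
    exact tendsto_nhds_unique l1 l2
  have hvisc : μ * deriv ut 0 + aa2 * deriv vt 0 / um
      = Faux aa1 cc1 ee1 um + Faux aa2 cc2 ee2 um - c0 := by
    have := h0val
    rw [hhfun] at this
    simp only [hut0, hvt0] at this
    linarith
  set Wf : ℝ → ℝ := fun x => μ * deriv ut x * (ut x - up)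
      + aa2 * deriv vt x / vt x * (vt x - up)
      - Phi aa1 cc1 ee1 up (ut x) - Phi aa2 cc2 ee2 up (vt x) with hWf
  have hWd : ∀ x ∈ Ioi (0:ℝ), HasDerivAt Wf
      (μ * deriv ut x ^ 2 + aa2 * deriv vt x ^ 2 / vt x + aa2 / vt x * (vt x - ut x) ^ 2) x := by
    intro x hx
    rw [mem_Ioi] at hx
    have hu := hutpos x hx.le
    have hv := hvtpos x hx.le
    have B1 : HasDerivAt (fun y => μ * deriv ut y * (ut y - up))
        (μ * deriv (deriv ut) x * (ut x - up) + μ * deriv ut x * deriv ut x) x :=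
      (hS x).mul ((hutd x).hasDerivAt.sub_const up)
    have B2 : HasDerivAt (fun y => aa2 * deriv vt y / vt y * (vt y - up))
        (deriv (fun y => aa2 * deriv vt y / vt y) x * (vt x - up)
          + aa2 * deriv vt x / vt x * deriv vt x) x :=
      (hTd x hx).hasDerivAt.mul ((hvtd x).hasDerivAt.sub_const up)
    have B3 : HasDerivAt (fun y => Phi aa1 cc1 ee1 up (ut y))
        (fq aa1 cc1 ee1 up (ut x) * deriv ut x) x :=
      (Phi_hasDerivAt aa1 cc1 ee1 hup hu).comp x (hutd x).hasDerivAt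
    have B4 : HasDerivAt (fun y => Phi aa2 cc2 ee2 up (vt y))
        (fq aa2 cc2 ee2 up (vt x) * deriv vt x) x :=
      (Phi_hasDerivAt aa2 cc2 ee2 hup hv).comp x (hvtd x).hasDerivAt
    have total : HasDerivAt Wf
        (μ * deriv (deriv ut) x * (ut x - up) + μ * deriv ut x * deriv ut x
          + (deriv (fun y => aa2 * deriv vt y / vt y) x * (vt x - up)
            + aa2 * deriv vt x / vt x * deriv vt x)
          - fq aa1 cc1 ee1 up (ut x) * deriv ut x
          - fq aa2 cc2 ee2 up (vt x) * deriv vt x) x := ((B1.add B2).sub B3).sub B4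
    have e1x' : μ * deriv (deriv ut) x
        = Fdaux aa1 cc1 ee1 (ut x) * deriv ut x - aa2 / vt x * (vt x - ut x) := by
      have := e1x x hx; linarith
    have e2x' : deriv (fun y => aa2 * deriv vt y / vt y) x
        = Fdaux aa2 cc2 ee2 (vt x) * deriv vt x + aa2 / vt x * (vt x - ut x) := by
      have := e2x x hx; linarith
    have hVI : μ * deriv (deriv ut) x * (ut x - up) + μ * deriv ut x * deriv ut x
          + (deriv (fun y => aa2 * deriv vt y / vt y) x * (vt x - up)
            + aa2 * deriv vt x / vt x * deriv vt x)
          - fq aa1 cc1 ee1 up (ut x) * deriv ut x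
          - fq aa2 cc2 ee2 up (vt x) * deriv vt x
        = μ * deriv ut x ^ 2 + aa2 * deriv vt x ^ 2 / vt x
          + aa2 / vt x * (vt x - ut x) ^ 2 := by
      rw [e1x', e2x']
      simp only [fq]
      ring
    exact hVI ▸ total
  have hWtop : Tendsto Wf atTop (𝓝 0) := by
    have w1 : Tendsto (fun x => μ * deriv ut x * (ut x - up)) atTop
        (𝓝 (μ * 0 * (up - up))) := (hdutT.const_mul μ).mul (hutT.sub_const up)
    have w2 : Tendsto (fun x => aa2 * deriv vt x / vt x * (vt x - up)) atTop
        (𝓝 (aa2 * 0 / up * (up - up))) :=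
      ((hdvtT.const_mul aa2).div hvtT hup.ne').mul (hvtT.sub_const up)
    have w3 : Tendsto (fun x => Phi aa1 cc1 ee1 up (ut x)) atTop
        (𝓝 (Phi aa1 cc1 ee1 up up)) :=
      ((Phi_hasDerivAt aa1 cc1 ee1 hup hup).continuousAt.tendsto).comp hutT
    have w4 : Tendsto (fun x => Phi aa2 cc2 ee2 up (vt x)) atTop
        (𝓝 (Phi aa2 cc2 ee2 up up)) :=
      ((Phi_hasDerivAt aa2 cc2 ee2 hup hup).continuousAt.tendsto).comp hvtT
    have := ((w1.add w2).sub w3).sub w4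
    simpa [Phi_self] using this
  have hWcont0 : ContinuousWithinAt Wf (Ici (0:ℝ)) 0 := by
    have hv0 : vt 0 ≠ 0 := (hvtpos 0 le_rfl).ne'
    have k1 : ContinuousAt (fun y => μ * deriv ut y * (ut y - up)) 0 :=
      ((continuous_const.mul hdutc).mul (hutd.continuous.sub continuous_const)).continuousAt
    have k2 : ContinuousAt (fun y => aa2 * deriv vt y / vt y * (vt y - up)) 0 :=
      (((continuous_const.mul hdvtc).continuousAt).div
        (hvtd.continuous.continuousAt) hv0).mul
        ((hvtd.continuous.sub continuous_const).continuousAt)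
    have k3 : ContinuousAt (fun y => Phi aa1 cc1 ee1 up (ut y)) 0 :=
      ((Phi_hasDerivAt aa1 cc1 ee1 hup (hutpos 0 le_rfl)).continuousAt).comp
        (hutd.continuous.continuousAt)
    have k4 : ContinuousAt (fun y => Phi aa2 cc2 ee2 up (vt y)) 0 :=
      ((Phi_hasDerivAt aa2 cc2 ee2 hup (hvtpos 0 le_rfl)).continuousAt).comp
        (hvtd.continuous.continuousAt)
    exact (((k1.add k2).sub k3).sub k4).continuousWithinAt
  have hnonneg : ∀ x ∈ Ioi (0:ℝ),
      0 ≤ μ * deriv ut x ^ 2 + aa2 * deriv vt x ^ 2 / vt x + aa2 / vt x * (vt x - ut x) ^ 2 := by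
    intro x hx
    rw [mem_Ioi] at hx
    have hv := hvtpos x hx.le
    have n1 : 0 ≤ μ * deriv ut x ^ 2 := mul_nonneg hμ.le (sq_nonneg _)
    have n2 : 0 ≤ aa2 * deriv vt x ^ 2 / vt x :=
      div_nonneg (mul_nonneg haa2pos.le (sq_nonneg _)) hv.le
    have n3 : 0 ≤ aa2 / vt x * (vt x - ut x) ^ 2 :=
      mul_nonneg (div_nonneg haa2pos.le hv.le) (sq_nonneg _)
    linarith
  have hint := MeasureTheory.integral_Ioi_of_hasDerivAt_of_nonneg hWcont0 hWd hnonneg hWtop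
  rw [hint]
  -- arithmetic bound on 0 - Wf 0
  have humge : up / 2 ≤ um := by
    have := (abs_le.mp hDle).2
    linarith
  have e0 : 0 - Wf 0 = -((um - up) * ((Faux aa1 cc1 ee1 um - Faux aa1 cc1 ee1 up)
        + (Faux aa2 cc2 ee2 um - Faux aa2 cc2 ee2 up)))
      + Phi aa1 cc1 ee1 up um + Phi aa2 cc2 ee2 up um := by
    rw [hWf]
    simp only [hut0, hvt0]
    rw [hc0] at hvisc
    linear_combination (up - um) * hvisc
  have b1 : |Faux aa1 cc1 ee1 um - Faux aa1 cc1 ee1 up| ≤ Mb aa1 cc1 ee1 up * D := by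
    have := Faux_lip aa1 cc1 ee1 hup he1 humge
    rwa [show |um - up| = D by rw [hD, abs_sub_comm]] at this
  have b2 : |Faux aa2 cc2 ee2 um - Faux aa2 cc2 ee2 up| ≤ Mb aa2 cc2 ee2 up * D := by
    have := Faux_lip aa2 cc2 ee2 hup he2 humge
    rwa [show |um - up| = D by rw [hD, abs_sub_comm]] at this
  have p1 : |Phi aa1 cc1 ee1 up um| ≤ Mb aa1 cc1 ee1 up * D * D :=
    Phi_bound aa1 cc1 ee1 hup he1 (le_of_eq hD.symm) hDle
  have p2 : |Phi aa2 cc2 ee2 up um| ≤ Mb aa2 cc2 ee2 up * D * D :=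
    Phi_bound aa2 cc2 ee2 hup he2 (le_of_eq hD.symm) hDle
  have htD : |um - up| ≤ D := by rw [hD, abs_sub_comm]
  have hM1 : 0 < Mb aa1 cc1 ee1 up := Mb_pos _ _ _ (mul_pos hρp hup).ne' hup
  have hM2 : 0 < Mb aa2 cc2 ee2 up := Mb_pos _ _ _ (mul_pos hnp hup).ne' hup
  have key : -((um - up) * ((Faux aa1 cc1 ee1 um - Faux aa1 cc1 ee1 up)
        + (Faux aa2 cc2 ee2 um - Faux aa2 cc2 ee2 up)))
      ≤ D * (Mb aa1 cc1 ee1 up * D + Mb aa2 cc2 ee2 up * D) := by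
    refine (neg_le_abs _).trans ?_
    rw [abs_mul]
    refine mul_le_mul htD ((abs_add_le _ _).trans (add_le_add b1 b2)) (abs_nonneg _) hDpos.le
  have q1 : Phi aa1 cc1 ee1 up um ≤ Mb aa1 cc1 ee1 up * D * D := (le_abs_self _).trans p1
  have q2 : Phi aa2 cc2 ee2 up um ≤ Mb aa2 cc2 ee2 up * D * D := (le_abs_self _).trans p2
  rw [e0]
  have : D ^ 2 = D * D := sq D
  nlinarith [key, q1, q2]
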